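/- Let λ > 0 be real and θ ∈ (−π, π). Then the Möbius transformation determined by S(λ) maps the circle C₂ = {z ∈ ℂ : |z + i·coth(λ/2)·tan(θ/2)| = coth(λ/2)·sec(θ/2)} into itself, and the Möbius transformation determined by S'(λ) maps the circle C₁ = {z ∈ ℂ : |z − i·tanh(λ/2)·tan(θ/2)| = tanh(λ/2)·sec(θ/2)} into itself (away from the respective poles). -/

import Mathlib

open Matrix

/-- `S(λ) = [[cosh λ, cosh λ + 1], [cosh λ − 1, cosh λ]]` -/
noncomputable def Smat (l : ℂ) : Matrix (Fin 2) (Fin 2) ℂ :=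
  !![Complex.cosh l, Complex.cosh l + 1; Complex.cosh l - 1, Complex.cosh l]

/-- `S'(λ) = [[cosh λ, cosh λ − 1], [cosh λ + 1, cosh λ]]` -/
noncomputable def Smat' (l : ℂ) : Matrix (Fin 2) (Fin 2) ℂ :=
  !![Complex.cosh l, Complex.cosh l - 1; Complex.cosh l + 1, Complex.cosh l]

private lemma key1 (c k a r u v : ℂ) (h1 : k^2*(c-1) = c+1) (h2 : r^2 = a^2 + k^2)
    (hz : (u + Complex.I*a)*(v - Complex.I*a) = r^2) :
    ((c*u + (c+1)) + Complex.I*a*((c-1)*u + c)) *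
      ((c*v + (c+1)) - Complex.I*a*((c-1)*v + c))
      = r^2 * (((c-1)*u + c)*((c-1)*v + c)) := by
  have hI : Complex.I^2 = -1 := Complex.I_sq
  linear_combination hz + (-((c-1)*u*v + c*(u+v) + (c+1)))*h1
    + (1 - ((c-1)*u+c)*((c-1)*v+c))*h2
    + (a^2*(1 - ((c-1)*u+c)*((c-1)*v+c)))*hI

private lemma key2 (c b a r u v : ℂ) (h1 : b^2*(c+1) = c-1) (h2 : r^2 = a^2 + b^2)
    (hz : (u - Complex.I*a)*(v + Complex.I*a) = r^2) :
    ((c*u + (c-1)) - Complex.I*a*((c+1)*u + c)) *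
      ((c*v + (c-1)) + Complex.I*a*((c+1)*v + c))
      = r^2 * (((c+1)*u + c)*((c+1)*v + c)) := by
  have hI : Complex.I^2 = -1 := Complex.I_sq
  linear_combination hz + (-((c+1)*u*v + c*(u+v) + (c-1)))*h1
    + (1 - ((c+1)*u+c)*((c+1)*v+c))*h2
    + (a^2*(1 - ((c+1)*u+c)*((c+1)*v+c)))*hI

private lemma abs_from_eq (X D : ℂ) (r : ℝ) (hr : 0 ≤ r) (hD : D ≠ 0)
    (h : X * (starRingEnd ℂ) X = (r:ℂ)^2 * (D * (starRingEnd ℂ) D)) :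
    norm (X / D) = r := by
  have h1 : (Complex.normSq X : ℂ) = ((r^2 * Complex.normSq D : ℝ) : ℂ) := by
    rw [Complex.mul_conj] at h; rw [h, Complex.mul_conj]; push_cast; ring
  have h2 : Complex.normSq X = r^2 * Complex.normSq D := by exact_mod_cast h1
  have h3 : norm X ^ 2 = (r * norm D)^2 := by
    rw [Complex.sq_norm, h2, mul_pow, Complex.sq_norm]
  have h4 : norm X = r * norm D := by
    nlinarith [norm_nonneg X, norm_nonneg D, mul_nonneg hr (norm_nonneg D)]
  rw [norm_div, h4]
  field_simp [norm_ne_zero_iff.mpr hD]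

private lemma main_step1 (c k a r : ℝ) (z : ℂ) (hr : 0 ≤ r)
    (h1 : k^2*(c-1) = c+1) (h2 : r^2 = a^2 + k^2)
    (habs : norm (z + Complex.I*(a:ℂ)) = r)
    (hD : ((c:ℂ)-1)*z + (c:ℂ) ≠ 0) :
    norm (((c:ℂ)*z + ((c:ℂ)+1))/(((c:ℂ)-1)*z + (c:ℂ)) + Complex.I*(a:ℂ)) = r := by
  set D : ℂ := ((c:ℂ)-1)*z + (c:ℂ) with hDdef
  have hzc : (z + Complex.I*(a:ℂ)) * ((starRingEnd ℂ) z - Complex.I*(a:ℂ)) = ((r:ℂ))^2 := by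
    have hmc := Complex.mul_conj (z + Complex.I*(a:ℂ))
    rw [Complex.normSq_eq_norm_sq, habs] at hmc
    rw [show (starRingEnd ℂ) z - Complex.I*(a:ℂ) = (starRingEnd ℂ) (z + Complex.I*(a:ℂ)) by
      simp [map_add, _root_.map_mul, Complex.conj_I, Complex.conj_ofReal]
      try ring]
    rw [hmc]; push_cast; ring
  have h1c : ((k:ℂ))^2*((c:ℂ)-1) = (c:ℂ)+1 := by exact_mod_cast h1
  have h2c : ((r:ℂ))^2 = ((a:ℂ))^2 + ((k:ℂ))^2 := by exact_mod_cast h2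
  have hkey := key1 (c:ℂ) (k:ℂ) (a:ℂ) (r:ℂ) z ((starRingEnd ℂ) z) h1c h2c hzc
  have hgoal : ((c:ℂ)*z + ((c:ℂ)+1))/D + Complex.I*(a:ℂ)
      = (((c:ℂ)*z + ((c:ℂ)+1)) + Complex.I*(a:ℂ)*D)/D := by
    field_simp
    try ring
  rw [hgoal]
  apply abs_from_eq _ _ _ hr hD
  have hconj : (starRingEnd ℂ) (((c:ℂ)*z + ((c:ℂ)+1)) + Complex.I*(a:ℂ)*D)
      = (((c:ℂ)*(starRingEnd ℂ) z + ((c:ℂ)+1))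
          - Complex.I*(a:ℂ)*(((c:ℂ)-1)*(starRingEnd ℂ) z + (c:ℂ))) := by
    simp only [hDdef, map_add, _root_.map_mul, map_sub, _root_.map_one, Complex.conj_I, Complex.conj_ofReal]
    ring
  have hconjD : (starRingEnd ℂ) D = ((c:ℂ)-1)*(starRingEnd ℂ) z + (c:ℂ) := by
    simp only [hDdef, map_add, _root_.map_mul, map_sub, _root_.map_one, Complex.conj_ofReal]
  rw [hconj, hconjD]
  exact hkey

private lemma main_step2 (c b a r : ℝ) (z : ℂ) (hr : 0 ≤ r)
    (h1 : b^2*(c+1) = c-1) (h2 : r^2 = a^2 + b^2)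
    (habs : norm (z - Complex.I*(a:ℂ)) = r)
    (hD : ((c:ℂ)+1)*z + (c:ℂ) ≠ 0) :
    norm (((c:ℂ)*z + ((c:ℂ)-1))/(((c:ℂ)+1)*z + (c:ℂ)) - Complex.I*(a:ℂ)) = r := by
  set D : ℂ := ((c:ℂ)+1)*z + (c:ℂ) with hDdef
  have hzc : (z - Complex.I*(a:ℂ)) * ((starRingEnd ℂ) z + Complex.I*(a:ℂ)) = ((r:ℂ))^2 := by
    have hmc := Complex.mul_conj (z - Complex.I*(a:ℂ))
    rw [Complex.normSq_eq_norm_sq, habs] at hmc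
    rw [show (starRingEnd ℂ) z + Complex.I*(a:ℂ) = (starRingEnd ℂ) (z - Complex.I*(a:ℂ)) by
      simp [map_sub, _root_.map_mul, Complex.conj_I, Complex.conj_ofReal]
      try ring]
    rw [hmc]; push_cast; ring
  have h1c : ((b:ℂ))^2*((c:ℂ)+1) = (c:ℂ)-1 := by exact_mod_cast h1
  have h2c : ((r:ℂ))^2 = ((a:ℂ))^2 + ((b:ℂ))^2 := by exact_mod_cast h2
  have hkey := key2 (c:ℂ) (b:ℂ) (a:ℂ) (r:ℂ) z ((starRingEnd ℂ) z) h1c h2c hzc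
  have hgoal : ((c:ℂ)*z + ((c:ℂ)-1))/D - Complex.I*(a:ℂ)
      = (((c:ℂ)*z + ((c:ℂ)-1)) - Complex.I*(a:ℂ)*D)/D := by
    field_simp
    try ring
  rw [hgoal]
  apply abs_from_eq _ _ _ hr hD
  have hconj : (starRingEnd ℂ) (((c:ℂ)*z + ((c:ℂ)-1)) - Complex.I*(a:ℂ)*D)
      = (((c:ℂ)*(starRingEnd ℂ) z + ((c:ℂ)-1))
          + Complex.I*(a:ℂ)*(((c:ℂ)+1)*(starRingEnd ℂ) z + (c:ℂ))) := by
    simp only [hDdef, map_add, _root_.map_mul, map_sub, _root_.map_one, Complex.conj_I, Complex.conj_ofReal]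
    ring
  have hconjD : (starRingEnd ℂ) D = ((c:ℂ)+1)*(starRingEnd ℂ) z + (c:ℂ) := by
    simp only [hDdef, map_add, _root_.map_mul, _root_.map_one, Complex.conj_ofReal]
  rw [hconj, hconjD]
  exact hkey

theorem S_preserves_circles (l θ : ℝ) (hl : 0 < l) (hθ : θ ∈ Set.Ioo (-Real.pi) Real.pi) :
    (∀ z : ℂ,
      norm (z + Complex.I * ((Real.cosh (l/2) / Real.sinh (l/2)) * Real.tan (θ/2))) =
        (Real.cosh (l/2) / Real.sinh (l/2)) * (1 / Real.cos (θ/2)) →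
      Smat l 1 0 * z + Smat l 1 1 ≠ 0 →
      norm ((Smat l 0 0 * z + Smat l 0 1) / (Smat l 1 0 * z + Smat l 1 1) +
          Complex.I * ((Real.cosh (l/2) / Real.sinh (l/2)) * Real.tan (θ/2))) =
        (Real.cosh (l/2) / Real.sinh (l/2)) * (1 / Real.cos (θ/2))) ∧
    (∀ z : ℂ,
      norm (z - Complex.I * (Real.tanh (l/2) * Real.tan (θ/2))) =
        Real.tanh (l/2) * (1 / Real.cos (θ/2)) →
      Smat' l 1 0 * z + Smat' l 1 1 ≠ 0 →
      norm ((Smat' l 0 0 * z + Smat' l 0 1) / (Smat' l 1 0 * z + Smat' l 1 1) -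
          Complex.I * (Real.tanh (l/2) * Real.tan (θ/2))) =
        Real.tanh (l/2) * (1 / Real.cos (θ/2))) := by
  have hl2 : 0 < l/2 := by linarith
  have hS : 0 < Real.sinh (l/2) := Real.sinh_pos_iff.mpr hl2
  have hC : 0 < Real.cosh (l/2) := Real.cosh_pos _
  have hcos : 0 < Real.cos (θ/2) := by
    apply Real.cos_pos_of_mem_Ioo
    constructor
    · have := hθ.1; linarith
    · have := hθ.2; linarith
  have hCS : Real.cosh (l/2)^2 - Real.sinh (l/2)^2 = 1 := Real.cosh_sq_sub_sinh_sq _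
  have hcoshl : Real.cosh l = Real.cosh (l/2)^2 + Real.sinh (l/2)^2 := by
    rw [← Real.cosh_two_mul]; congr 1; ring
  have htan : 1 + Real.tan (θ/2)^2 = (1/Real.cos (θ/2))^2 := by
    have h := Real.inv_one_add_tan_sq hcos.ne'
    rw [div_pow, one_pow, ← h, one_div, inv_inv]
  have hcoshcast : Complex.cosh (l : ℂ) = ((Real.cosh l : ℝ) : ℂ) := by
    rw [← Complex.ofReal_cosh]
  constructor
  · intro z habs hD
    set k : ℝ := Real.cosh (l/2) / Real.sinh (l/2) with hk
    set a : ℝ := k * Real.tan (θ/2) with ha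
    set r : ℝ := k * (1/Real.cos (θ/2)) with hrdef
    have hkpos : 0 < k := div_pos hC hS
    have hr : 0 ≤ r := by positivity
    have hS2 : Real.sinh (l/2)^2 ≠ 0 := pow_ne_zero 2 hS.ne'
    have h1 : k^2*(Real.cosh l - 1) = Real.cosh l + 1 := by
      rw [hcoshl, hk, div_pow, div_mul_eq_mul_div, div_eq_iff hS2]
      linear_combination (Real.cosh (l/2)^2 + Real.sinh (l/2)^2) * hCS
    have h2 : r^2 = a^2 + k^2 := by
      rw [hrdef, ha]
      linear_combination (-(k^2)) * htan
    have hacast : ((a:ℝ):ℂ) = (Real.cosh (l/2):ℂ)/(Real.sinh (l/2):ℂ) * (Real.tan (θ/2):ℂ) := by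
      rw [ha, hk]; push_cast; ring
    have habs' : norm (z + Complex.I*(a:ℂ)) = r := by rw [hacast]; exact habs
    have hD' : ((Real.cosh l:ℂ)-1)*z + (Real.cosh l:ℂ) ≠ 0 := by
      simpa only [Smat, hcoshcast, Matrix.cons_val', Matrix.cons_val_zero, Matrix.cons_val_one,
        Matrix.head_cons, Matrix.empty_val', Matrix.cons_val_fin_one, Matrix.head_fin_const,
        Matrix.of_apply] using hD
    have h := main_step1 (Real.cosh l) k a r z hr h1 h2 habs' hD'
    rw [hacast] at h
    simpa only [Smat, hcoshcast, Matrix.cons_val', Matrix.cons_val_zero, Matrix.cons_val_one,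
      Matrix.head_cons, Matrix.empty_val', Matrix.cons_val_fin_one, Matrix.head_fin_const,
      Matrix.of_apply] using h
  · intro z habs hD
    set b : ℝ := Real.tanh (l/2) with hb
    set a : ℝ := b * Real.tan (θ/2) with ha
    set r : ℝ := b * (1/Real.cos (θ/2)) with hrdef
    have hbsc : b = Real.sinh (l/2) / Real.cosh (l/2) := by
      rw [hb, Real.tanh_eq_sinh_div_cosh]
    have hbpos : 0 < b := by rw [hbsc]; exact div_pos hS hC
    have hr : 0 ≤ r := by positivity
    have hC2 : Real.cosh (l/2)^2 ≠ 0 := pow_ne_zero 2 hC.ne'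
    have h1 : b^2*(Real.cosh l + 1) = Real.cosh l - 1 := by
      rw [hcoshl, hbsc, div_pow, div_mul_eq_mul_div, div_eq_iff hC2]
      linear_combination (-(Real.cosh (l/2)^2 + Real.sinh (l/2)^2)) * hCS
    have h2 : r^2 = a^2 + b^2 := by
      rw [hrdef, ha]
      linear_combination (-(b^2)) * htan
    have hacast : ((a:ℝ):ℂ) = (Real.tanh (l/2):ℂ) * (Real.tan (θ/2):ℂ) := by
      rw [ha, hb]; push_cast; ring
    have habs' : norm (z - Complex.I*(a:ℂ)) = r := by rw [hacast]; exact habs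
    have hD' : ((Real.cosh l:ℂ)+1)*z + (Real.cosh l:ℂ) ≠ 0 := by
      simpa only [Smat', hcoshcast, Matrix.cons_val', Matrix.cons_val_zero, Matrix.cons_val_one,
        Matrix.head_cons, Matrix.empty_val', Matrix.cons_val_fin_one, Matrix.head_fin_const,
        Matrix.of_apply] using hD
    have h := main_step2 (Real.cosh l) b a r z hr h1 h2 habs' hD'
    rw [hacast] at h
    simpa only [Smat', hcoshcast, Matrix.cons_val', Matrix.cons_val_zero, Matrix.cons_val_one,
      Matrix.head_cons, Matrix.empty_val', Matrix.cons_val_fin_one, Matrix.head_fin_const,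
      Matrix.of_apply] using h
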